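/- (Gradient formula, eq. (15)) Define F : ℝ^{Ma}×ℝ^{Mb} → ℝ by F(u,v) = (N/λ)·s(u,v) if s(u,v) ≤ 1 and F(u,v) = (N/λ)·log s(u,v) + N/λ if s(u,v) ≥ 1, where Q(u,v)_{ij} = e^{λ(u_i + v_j − C_{ij}) − 1} and s(u,v) = ∑_{i,j} Q(u,v)_{ij}. Then F is differentiable everywhere, and its gradient at (u,v) equals N·(Q·1_{Mb}, Qᵀ·1_{Ma}) when s(u,v) ≤ 1, and (N/s(u,v))·(Q·1_{Mb}, Qᵀ·1_{Ma}) when s(u,v) ≥ 1, where Q·1_{Mb} ∈ ℝ^{Ma} is the vector of row sums of Q and Qᵀ·1_{Ma} ∈ ℝ^{Mb} is the vector of column sums of Q. -/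

import Mathlib

open scoped BigOperators

/-- The matrix `Q(u,v)` with entries `e^{λ(u_i + v_j − C_{ij}) − 1}`. -/
noncomputable def Qmat {Ma Mb : ℕ} (C : Matrix (Fin Ma) (Fin Mb) ℝ) (lam : ℝ)
    (u : Fin Ma → ℝ) (v : Fin Mb → ℝ) : Matrix (Fin Ma) (Fin Mb) ℝ :=
  fun i j => Real.exp (lam * (u i + v j - C i j) - 1)

/-- `s(u,v) = ∑_{i,j} Q(u,v)_{ij}`. -/
noncomputable def sQ {Ma Mb : ℕ} (C : Matrix (Fin Ma) (Fin Mb) ℝ) (lam : ℝ)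
    (u : Fin Ma → ℝ) (v : Fin Mb → ℝ) : ℝ :=
  ∑ i, ∑ j, Qmat C lam u v i j

/-- The conjugate `F` of the normalized Sinkhorn distance:
`F(u,v) = (N/λ)·s(u,v)` if `s(u,v) ≤ 1`, and `(N/λ)·log s(u,v) + N/λ` otherwise.
(The two branches agree on `{s = 1}`.) -/
noncomputable def Fconj {Ma Mb : ℕ} (C : Matrix (Fin Ma) (Fin Mb) ℝ) (lam N : ℝ)
    (x : (Fin Ma → ℝ) × (Fin Mb → ℝ)) : ℝ :=
  if sQ C lam x.1 x.2 ≤ 1 then (N / lam) * sQ C lam x.1 x.2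
  else (N / lam) * Real.log (sQ C lam x.1 x.2) + N / lam

/-- (Gradient formula, eq. (15)) `F` is differentiable everywhere, and its
gradient at `(u,v)` is `N·(Q·1, Qᵀ·1)` when `s(u,v) ≤ 1` and
`(N/s(u,v))·(Q·1, Qᵀ·1)` when `s(u,v) ≥ 1`, where `Q·1` and `Qᵀ·1` are the
row- and column-sum vectors of `Q(u,v)`. (The coefficients agree on `{s = 1}`,
and the gradient is expressed through the action of the derivative on a
displacement `(du,dv)`.) -/

noncomputable def gfun : ℝ → ℝ := fun t => if t ≤ 1 then t else Real.log t + 1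

lemma gfun_hasDerivAt {t : ℝ} (ht : 0 < t) :
    HasDerivAt gfun (if t ≤ 1 then 1 else 1/t) t := by
  rcases lt_trichotomy t 1 with h | h | h
  · rw [if_pos h.le]
    have heq : gfun =ᶠ[nhds t] id :=
      Filter.eventuallyEq_of_mem (Iio_mem_nhds h) fun x hx => if_pos (le_of_lt hx)
    exact (hasDerivAt_id t).congr_of_eventuallyEq heq
  · subst h
    rw [if_pos le_rfl]
    have h1 : HasDerivWithinAt gfun 1 (Set.Iic 1) 1 := by
      refine (hasDerivWithinAt_id (1:ℝ) (Set.Iic 1)).congr (fun x hx => ?_) (by simp [gfun])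
      simp [gfun, Set.mem_Iic.mp hx]
    have h2 : HasDerivWithinAt gfun 1 (Set.Ici 1) 1 := by
      have hl : HasDerivAt (fun t : ℝ => Real.log t + 1) 1 (1:ℝ) := by
        simpa using (Real.hasDerivAt_log one_ne_zero).add_const 1
      refine hl.hasDerivWithinAt.congr (fun x hx => ?_) (by simp [gfun])
      rcases eq_or_lt_of_le (Set.mem_Ici.mp hx) with h | h
      · simp [gfun, ← h]
      · simp [gfun, not_le.mpr h]
    have := h1.union h2
    rw [Set.Iic_union_Ici] at this
    exact this.hasDerivAt (by simp)
  · rw [if_neg (not_le.mpr h)]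
    have heq : gfun =ᶠ[nhds t] (fun x => Real.log x + 1) :=
      Filter.eventuallyEq_of_mem (Ioi_mem_nhds h) fun x hx => if_neg (not_le.mpr hx)
    have hl : HasDerivAt (fun x : ℝ => Real.log x + 1) (1/t) t := by
      simpa [one_div] using (Real.hasDerivAt_log (ne_of_gt ht)).add_const 1
    exact hl.congr_of_eventuallyEq heq

theorem gradient_formula_Fconj (Ma Mb : ℕ) (hMa : 0 < Ma) (hMb : 0 < Mb)
    (C : Matrix (Fin Ma) (Fin Mb) ℝ) (lam N : ℝ) (hlam : 0 < lam) (hN : 0 < N) :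
    Differentiable ℝ (Fconj C lam N) ∧
    ∀ (u : Fin Ma → ℝ) (v : Fin Mb → ℝ) (du : Fin Ma → ℝ) (dv : Fin Mb → ℝ),
      fderiv ℝ (Fconj C lam N) (u, v) (du, dv)
        = (if sQ C lam u v ≤ 1 then N else N / sQ C lam u v)
          * ((∑ i, (∑ j, Qmat C lam u v i j) * du i)
            + (∑ j, (∑ i, Qmat C lam u v i j) * dv j)) := by
  -- positivity of s
  have hs : ∀ (u : Fin Ma → ℝ) (v : Fin Mb → ℝ), 0 < sQ C lam u v := by
    intro u v
    have : ∀ i ∈ (Finset.univ : Finset (Fin Ma)), 0 < ∑ j, Qmat C lam u v i j := by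
      intro i _
      exact Finset.sum_pos (fun j _ => Real.exp_pos _)
        (Finset.univ_nonempty_iff.mpr ⟨⟨0, hMb⟩⟩)
    exact Finset.sum_pos this (Finset.univ_nonempty_iff.mpr ⟨⟨0, hMa⟩⟩)
  -- F = (N/lam) * g ∘ s
  have hgF : Fconj C lam N
      = fun x : (Fin Ma → ℝ) × (Fin Mb → ℝ) => (N / lam) * gfun (sQ C lam x.1 x.2) := by
    funext x
    by_cases h : sQ C lam x.1 x.2 ≤ 1 <;>
      simp [Fconj, gfun, h, mul_add]
  -- derivative of s
  set P1 : ∀ i : Fin Ma, ((Fin Ma → ℝ) × (Fin Mb → ℝ)) →L[ℝ] ℝ :=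
    fun i => (ContinuousLinearMap.proj i).comp
      (ContinuousLinearMap.fst ℝ (Fin Ma → ℝ) (Fin Mb → ℝ)) with hP1
  set P2 : ∀ j : Fin Mb, ((Fin Ma → ℝ) × (Fin Mb → ℝ)) →L[ℝ] ℝ :=
    fun j => (ContinuousLinearMap.proj j).comp
      (ContinuousLinearMap.snd ℝ (Fin Ma → ℝ) (Fin Mb → ℝ)) with hP2
  have hsder : ∀ (u : Fin Ma → ℝ) (v : Fin Mb → ℝ),
      HasFDerivAt (fun x : (Fin Ma → ℝ) × (Fin Mb → ℝ) => sQ C lam x.1 x.2)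
        (∑ i, ∑ j, Qmat C lam u v i j • (lam • (P1 i + P2 j))) (u, v) := by
    intro u v
    have : (fun x : (Fin Ma → ℝ) × (Fin Mb → ℝ) => sQ C lam x.1 x.2)
        = fun x => ∑ i, ∑ j, Real.exp (lam * (x.1 i + x.2 j - C i j) - 1) := rfl
    rw [this]
    apply HasFDerivAt.fun_sum
    intro i _
    apply HasFDerivAt.fun_sum
    intro j _
    have hA : HasFDerivAt (fun x : (Fin Ma → ℝ) × (Fin Mb → ℝ) => x.1 i + x.2 j)
        (P1 i + P2 j) (u, v) := (P1 i + P2 j).hasFDerivAt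
    have hB := ((hA.sub_const (C i j)).const_mul lam).sub_const 1
    exact hB.exp
  -- main differentiability statement
  have main : ∀ (u : Fin Ma → ℝ) (v : Fin Mb → ℝ),
      HasFDerivAt (Fconj C lam N)
        (((N / lam) * (if sQ C lam u v ≤ 1 then 1 else 1 / sQ C lam u v)) •
          (∑ i, ∑ j, Qmat C lam u v i j • (lam • (P1 i + P2 j)))) (u, v) := by
    intro u v
    rw [hgF, mul_smul]
    exact ((gfun_hasDerivAt (hs u v)).comp_hasFDerivAt (u, v) (hsder u v)).const_mul (N / lam)
  constructor
  · intro x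
    exact (main x.1 x.2).differentiableAt
  · intro u v du dv
    rw [(main u v).fderiv]
    have happ : (∑ i, ∑ j, Qmat C lam u v i j • (lam • (P1 i + P2 j))) (du, dv)
        = ∑ i, ∑ j, Qmat C lam u v i j * (lam * (du i + dv j)) := by
      simp [P1, P2, ContinuousLinearMap.sum_apply]
      exact Finset.sum_congr rfl fun i _ => Finset.sum_congr rfl fun j _ => by ring
    rw [ContinuousLinearMap.smul_apply, happ]
    have hsum : ∑ i, ∑ j, Qmat C lam u v i j * (lam * (du i + dv j))
        = lam * ((∑ i, (∑ j, Qmat C lam u v i j) * du i)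
            + (∑ j, (∑ i, Qmat C lam u v i j) * dv j)) := by
      rw [mul_add, Finset.mul_sum, Finset.mul_sum]
      have h1 : ∀ i, ∑ j, Qmat C lam u v i j * (lam * (du i + dv j))
          = lam * ((∑ j, Qmat C lam u v i j) * du i)
            + ∑ j, lam * (Qmat C lam u v i j * dv j) := by
        intro i
        rw [Finset.sum_mul, Finset.mul_sum, ← Finset.sum_add_distrib]
        exact Finset.sum_congr rfl fun j _ => by ring
      simp_rw [h1]
      rw [Finset.sum_add_distrib]
      congr 1
      rw [Finset.sum_comm]
      refine Finset.sum_congr rfl fun j _ => ?_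
      rw [Finset.sum_mul, Finset.mul_sum]
    rw [hsum]
    have hlne : lam ≠ 0 := ne_of_gt hlam
    have hsne : sQ C lam u v ≠ 0 := ne_of_gt (hs u v)
    by_cases h : sQ C lam u v ≤ 1
    · simp only [h, if_true, smul_eq_mul]
      field_simp
    · simp only [h, if_false, smul_eq_mul]
      field_simp
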